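/- Let K be the fraction field of the polynomial ring over ℚ in a family of variables indexed by a set of cardinality 𝔠 (the rational function field ℚ(tᵢ | i < 𝔠)). Then there is a family of 2^𝔠 orderings on K, each making K a non-archimedean ordered field, which are pairwise non-isomorphic: for any two distinct orderings <₁ and <₂ in the family, there is no ring isomorphism f : K → K that is order-preserving from (K, <₁) to (K, <₂). -/

import Mathlib

open Cardinal

/-- A relation `r` (strict ordering) on a field `K` is a field ordering if it is a strict
total order compatible with the field structure: addition preserves it, and products of
positive elements are positive (i.e. it makes `K` a linearly ordered field). -/
def IsFieldOrdering {K : Type*} [Field K] (r : K → K → Prop) : Prop :=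
  IsStrictTotalOrder K r ∧ (∀ a b c : K, r a b → r (a + c) (b + c)) ∧
    (∀ a b : K, r 0 a → r 0 b → r 0 (a * b))

/-- An ordering `r` on a field `K` is archimedean if every element is below some natural
number. -/
def IsArchimedeanOrdering {K : Type*} [Field K] (r : K → K → Prop) : Prop :=
  ∀ x : K, ∃ n : ℕ, r x (n : K)

open Polynomial Hyperreal

/-! ### Auxiliary: the real-coefficient embedding into the hyperreals -/

/-- The coercion `ℝ → ℝ*` as a ring homomorphism. -/
noncomputable def hrh : ℝ →+* Hyperreal where
  toFun := Hyperreal.ofReal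
  map_one' := Hyperreal.coe_one
  map_mul' := Hyperreal.coe_mul
  map_zero' := Hyperreal.coe_zero
  map_add' := Hyperreal.coe_add

theorem hrh_lt_iff {x y : ℝ} : hrh x < hrh y ↔ x < y := Hyperreal.coe_lt_coe

theorem isSt_hrh (r : ℝ) : IsSt (hrh r) r := isSt_refl_real r

theorem hrh_injective : Function.Injective hrh := fun _ _ h => by
  simpa [hrh] using h

theorem isSt_sum {α : Type*} (s : Finset α) (f : α → ℝ*) (g : α → ℝ)
    (h : ∀ a ∈ s, IsSt (f a) (g a)) : IsSt (∑ a ∈ s, f a) (∑ a ∈ s, g a) := by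
  classical
  induction s using Finset.induction_on with
  | empty => simpa using isSt_refl_real 0
  | insert _ _ ha ih =>
    rw [Finset.sum_insert ha, Finset.sum_insert ha]
    exact (h _ (Finset.mem_insert_self _ _)).add
      (ih fun a has => h a (Finset.mem_insert_of_mem has))

theorem infinitesimal_epsilon_pow {m : ℕ} (hm : m ≠ 0) : Infinitesimal (ε ^ m) := by
  induction m with
  | zero => simp at hm
  | succ n ih =>
    rcases Nat.eq_zero_or_pos n with rfl | hn
    · simpa using infinitesimal_epsilon
    · rw [pow_succ]
      exact (ih hn.ne').mul infinitesimal_epsilon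

/-- Key hyperreal computation: `p(ω) ⬝ ε^d` has standard part the `d`-th coefficient of `p`,
whenever `d` is at least the degree of `p`. -/
theorem key (p : ℝ[X]) (d : ℕ) (hd : p.natDegree ≤ d) :
    IsSt (p.eval₂ hrh ω * ε ^ d) (p.coeff d) := by
  rw [eval₂_eq_sum_range' hrh (lt_of_le_of_lt hd (Nat.lt_succ_self d)), Finset.sum_mul]
  have hsum : p.coeff d = ∑ i ∈ Finset.range (d + 1), (if i = d then p.coeff d else 0) := by
    rw [Finset.sum_ite_eq' (Finset.range (d+1)) d (fun _ => p.coeff d)]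
    simp
  rw [hsum]
  apply isSt_sum
  intro i hi
  rw [Finset.mem_range, Nat.lt_succ_iff] at hi
  have hoe : (ω : ℝ*) ^ i * ε ^ d = ε ^ (d - i) := by
    have : ε ^ d = ε ^ i * ε ^ (d - i) := by rw [← pow_add, Nat.add_sub_cancel' hi]
    rw [this, ← mul_assoc, ← mul_pow, mul_comm (ω : ℝ*) ε, epsilon_mul_omega, one_pow, one_mul]
  rw [mul_assoc, hoe]
  rcases eq_or_ne i d with rfl | hne
  · simp only [if_pos rfl, Nat.sub_self, pow_zero, mul_one]
    exact isSt_hrh _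
  · rw [if_neg hne]
    have := (isSt_hrh (p.coeff i)).mul (infinitesimal_epsilon_pow (m := d - i) (by omega))
    simpa using this

theorem eval₂_omega_ne_zero {p : ℝ[X]} (hp : p ≠ 0) : p.eval₂ hrh ω ≠ 0 := by
  intro h
  have hk := key p p.natDegree le_rfl
  rw [h, zero_mul] at hk
  exact (Polynomial.leadingCoeff_ne_zero.mpr hp) (infinitesimal_zero.unique hk).symm

/-- The standard part of a ratio of polynomials in `ω` is the ratio of the top coefficients. -/
theorem main_st (p q : ℝ[X]) (hq : q.eval₂ hrh ω ≠ 0) {c : ℝ}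
    (hc : IsSt (p.eval₂ hrh ω / q.eval₂ hrh ω) c) :
    q.coeff (max p.natDegree q.natDegree) ≠ 0 ∧
      c * q.coeff (max p.natDegree q.natDegree) = p.coeff (max p.natDegree q.natDegree) := by
  set d := max p.natDegree q.natDegree with hd
  have hA := key p d (le_max_left _ _)
  have hB := key q d (le_max_right _ _)
  have hq0 : q ≠ 0 := fun h0 => hq (by simp [h0])
  have hxB : (p.eval₂ hrh ω / q.eval₂ hrh ω) * (q.eval₂ hrh ω * ε ^ d)
      = p.eval₂ hrh ω * ε ^ d := by
    field_simp
  have h1 : c * q.coeff d = p.coeff d := by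
    have := hc.mul hB
    rw [hxB] at this
    exact this.unique hA
  refine ⟨?_, h1⟩
  intro h
  have hdq : d ≠ q.natDegree := by
    intro he
    rw [he] at h
    exact (Polynomial.leadingCoeff_ne_zero.mpr hq0) h
  have hdp : d = p.natDegree := by
    rcases max_choice p.natDegree q.natDegree with h' | h' <;> omega
  have hp0 : p ≠ 0 := by
    intro h0
    have h2 : q.natDegree ≤ d := le_max_right _ _
    rw [h0, Polynomial.natDegree_zero] at hdp
    omega
  apply Polynomial.leadingCoeff_ne_zero.mpr hp0
  rw [Polynomial.leadingCoeff, ← hdp, ← h1, h, mul_zero]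

/-- `ω` is transcendental over any subalgebra of standard reals. -/
theorem transcendental_omega_adjoin {s : Set ℝ*} (hs : s ⊆ Set.range hrh) :
    Transcendental (Algebra.adjoin ℚ s) ω := by
  intro halg
  obtain ⟨P, hP0, hPeval⟩ := halg
  set P' : Polynomial ℝ* := P.map (algebraMap (Algebra.adjoin ℚ s) ℝ*) with hP'
  have hle : Algebra.adjoin ℚ s ≤ hrh.toRatAlgHom.range :=
    Algebra.adjoin_le (fun x hx => by
      obtain ⟨y, hy⟩ := hs hx
      exact ⟨y, hy⟩)
  have hcoeff : ∀ n, P'.coeff n ∈ Set.range hrh := by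
    intro n
    rw [hP', Polynomial.coeff_map]
    obtain ⟨y, hy⟩ := hle (P.coeff n).2
    exact ⟨y, hy⟩
  obtain ⟨Q, hQ⟩ := (Polynomial.mem_lifts _).mp ((Polynomial.lifts_iff_coeff_lifts P').mpr hcoeff)
  have hinj : Function.Injective (algebraMap (Algebra.adjoin ℚ s) ℝ*) :=
    Subtype.val_injective
  have hQ0 : Q ≠ 0 := by
    rintro rfl
    apply hP0
    have : P' = 0 := by rw [← hQ, Polynomial.map_zero]
    exact Polynomial.map_injective _ hinj (by simpa using this)
  apply eval₂_omega_ne_zero hQ0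
  rw [Polynomial.eval₂_eq_eval_map, hQ, hP']
  rw [Polynomial.aeval_def, Polynomial.eval₂_eq_eval_map] at hPeval
  exact hPeval

/-! ### Pullback orderings -/

section ord
variable {K : Type*} [Field K] (φ : K →+* ℝ*)

theorem pullback_isFieldOrdering : IsFieldOrdering (fun a b => φ a < φ b) := by
  refine ⟨{ trichotomous := ?_, irrefl := ?_, trans := ?_ }, ?_, ?_⟩
  · intro a b h1 h2
    rcases lt_trichotomy (φ a) (φ b) with h | h | h
    · exact absurd h h1
    · exact φ.injective h
    · exact absurd h h2
  · intro a; exact lt_irrefl _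
  · intro a b c; exact lt_trans
  · intro a b c h
    simp only [map_add]
    exact add_lt_add_of_lt_of_le h le_rfl
  · intro a b ha hb
    simp only [map_zero, map_mul] at *
    exact mul_pos ha hb

theorem pullback_not_arch {x : K} (hx : φ x = ω) :
    ¬ IsArchimedeanOrdering (fun a b => φ a < φ b) := by
  intro h
  obtain ⟨n, hn⟩ := h x
  rw [hx, map_natCast] at hn
  have h2 : hrh ((n : ℕ) : ℝ) < ω := infinitePos_omega _
  rw [map_natCast] at h2
  exact lt_asymm h2 hn

end ord

/-! ### The family of embeddings -/

section Aux
variable {ι : Type} (E : ι ≃ Option ι) (r : ι ⊕ ι → ℝ)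

noncomputable def gsel (T : Set ι) : ι → ι ⊕ ι :=
  fun a => @ite _ (a ∈ T) (Classical.dec _) (Sum.inl a) (Sum.inr a)

theorem gsel_injective (T : Set ι) : Function.Injective (gsel T) := by
  intro a b h
  unfold gsel at h
  split at h <;> split at h <;> simp_all

noncomputable def uu (T : Set ι) : ι → ℝ := r ∘ gsel T

noncomputable def vv (T : Set ι) : ι → ℝ* :=
  fun i => (E i).elim ω (fun a => hrh (uu r T a))

abbrev KK (ι : Type) := FractionRing (MvPolynomial ι ℚ)

theorem vv_algIndep (hr : AlgebraicIndependent ℚ r) (T : Set ι) :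
    AlgebraicIndependent ℚ (vv E r T) := by
  classical
  have h1 : AlgebraicIndependent ℚ (uu r T) := hr.comp (gsel T) (gsel_injective T)
  have h2 : AlgebraicIndependent ℚ (fun a => hrh (uu r T a)) :=
    h1.map' (f := hrh.toRatAlgHom) (fun x y h => hrh_injective h)
  have h3 : AlgebraicIndependent ℚ (fun o : Option ι => o.elim ω (fun a => hrh (uu r T a))) := by
    refine (h2.option_iff_transcendental ω).mpr ?_
    apply transcendental_omega_adjoin
    rintro x ⟨a, rfl⟩
    exact ⟨uu r T a, rfl⟩
  exact h3.comp E E.injective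

variable (hr : AlgebraicIndependent ℚ r)

noncomputable def phi (T : Set ι) : KK ι →+* ℝ* :=
  IsFractionRing.lift (g := ((MvPolynomial.aeval (vv E r T)).toRingHom : MvPolynomial ι ℚ →+* ℝ*))
    (algebraicIndependent_iff_injective_aeval.mp (vv_algIndep E r hr T))

theorem phi_algebraMap (T : Set ι) (A : MvPolynomial ι ℚ) :
    phi E r hr T (algebraMap (MvPolynomial ι ℚ) (KK ι) A) = MvPolynomial.aeval (vv E r T) A :=
  IsFractionRing.lift_algebraMap _ _

noncomputable def FT (T : Set ι) : Subalgebra ℚ ℝ := Algebra.adjoin ℚ (Set.range (uu r T))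

noncomputable def psi (T : Set ι) : MvPolynomial ι ℚ →+* Polynomial (FT r T) :=
  (MvPolynomial.eval₂Hom (algebraMap ℚ _)
    (fun i => (E i).elim X (fun a => C ⟨uu r T a, Algebra.subset_adjoin ⟨a, rfl⟩⟩)))

theorem psi_eval (T : Set ι) (A : MvPolynomial ι ℚ) :
    eval₂ hrh ω ((psi E r T A).map (algebraMap (FT r T) ℝ)) = MvPolynomial.aeval (vv E r T) A := by
  have h : (Polynomial.eval₂RingHom hrh ω).comp
      ((Polynomial.mapRingHom (algebraMap (FT r T) ℝ)).comp (psi E r T))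
      = (MvPolynomial.aeval (vv E r T)).toRingHom := by
    apply MvPolynomial.ringHom_ext
    · intro q
      simp only [RingHom.comp_apply, psi, MvPolynomial.eval₂Hom_C, coe_mapRingHom,
        coe_eval₂RingHom, AlgHom.toRingHom_eq_coe, RingHom.coe_coe, MvPolynomial.aeval_C]
      rw [show (algebraMap ℚ (Polynomial (FT r T))) q = C (algebraMap ℚ (FT r T) q) from rfl]
      rw [Polynomial.map_C, eval₂_C]
      rw [show (algebraMap (FT r T) ℝ) (algebraMap ℚ (FT r T) q) = algebraMap ℚ ℝ q from
        (IsScalarTower.algebraMap_apply ℚ (FT r T) ℝ q).symm]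
      simp [eq_ratCast, map_ratCast]
    · intro i
      simp only [RingHom.comp_apply, psi, MvPolynomial.eval₂Hom_X', coe_mapRingHom,
        coe_eval₂RingHom, AlgHom.toRingHom_eq_coe, RingHom.coe_coe, MvPolynomial.aeval_X]
      cases hEi : E i with
      | none => simp [vv, hEi]
      | some a => simp [vv, hEi]
  have := RingHom.congr_fun h A
  simpa using this

theorem subset_of_orderIso (T T' : Set ι) (f : KK ι ≃+* KK ι)
    (hf : ∀ a b, (phi E r hr T a < phi E r hr T b) ↔ (phi E r hr T' (f a) < phi E r hr T' (f b))) :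
    T ⊆ T' := by
  intro a ha
  by_contra ha'
  set b := r (Sum.inl a) with hb
  set ta : KK ι := algebraMap (MvPolynomial ι ℚ) (KK ι) (MvPolynomial.X (E.symm (some a))) with hta
  have hφT : phi E r hr T ta = hrh b := by
    rw [hta, phi_algebraMap, MvPolynomial.aeval_X]
    show (E (E.symm (some a))).elim ω (fun a => hrh (uu r T a)) = hrh b
    rw [Equiv.apply_symm_apply]
    show hrh (uu r T a) = hrh b
    congr 1
    show r (gsel T a) = r (Sum.inl a)
    unfold gsel
    rw [if_pos ha]
  set x := phi E r hr T' (f ta) with hx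
  -- x has standard part b
  have hIsSt : IsSt x b := by
    intro δ hδ
    constructor
    · obtain ⟨qr, hq1, hq2⟩ := exists_rat_btwn (sub_lt_self b hδ)
      have h1 : phi E r hr T ((qr : ℚ) : KK ι) < phi E r hr T ta := by
        rw [map_ratCast, hφT, ← map_ratCast hrh qr]
        exact hrh_lt_iff.2 hq2
      have h2 := (hf _ _).1 h1
      rw [map_ratCast f, map_ratCast] at h2
      have h3 : hrh (b - δ) < hrh (qr : ℝ) := hrh_lt_iff.2 hq1
      rw [map_ratCast hrh qr] at h3
      calc (↑b - ↑δ : ℝ*) = hrh (b - δ) := by rw [map_sub]; rfl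
        _ < ((qr : ℚ) : ℝ*) := h3
        _ < x := h2
    · obtain ⟨qr, hq1, hq2⟩ := exists_rat_btwn (lt_add_of_pos_right b hδ)
      have h1 : phi E r hr T ta < phi E r hr T ((qr : ℚ) : KK ι) := by
        rw [map_ratCast, hφT, ← map_ratCast hrh qr]
        exact hrh_lt_iff.2 hq1
      have h2 := (hf _ _).1 h1
      rw [map_ratCast f, map_ratCast] at h2
      have h3 : hrh (qr : ℝ) < hrh (b + δ) := hrh_lt_iff.2 hq2
      rw [map_ratCast hrh qr] at h3
      calc x < ((qr : ℚ) : ℝ*) := h2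
        _ < hrh (b + δ) := h3
        _ = (↑b + ↑δ : ℝ*) := by rw [map_add]; rfl
  -- representation of x as a rational function of ω with coefficients in FT r T'
  obtain ⟨A, Bp, hBmem, hAB⟩ := IsFractionRing.div_surjective (A := MvPolynomial ι ℚ) (f ta)
  have hBne : Bp ≠ 0 := nonZeroDivisors.ne_zero hBmem
  set p : ℝ[X] := (psi E r T' A).map (algebraMap (FT r T') ℝ) with hp
  set q : ℝ[X] := (psi E r T' Bp).map (algebraMap (FT r T') ℝ) with hq
  have hevB : q.eval₂ hrh ω ≠ 0 := by
    rw [hq, psi_eval]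
    intro h0
    apply hBne
    apply algebraicIndependent_iff_injective_aeval.mp (vv_algIndep E r hr T')
    rw [h0, map_zero]
  have hxpq : x = p.eval₂ hrh ω / q.eval₂ hrh ω := by
    rw [hp, hq, psi_eval, psi_eval, hx, ← hAB, map_div₀, phi_algebraMap, phi_algebraMap]
  rw [hxpq] at hIsSt
  obtain ⟨hqd, heq⟩ := main_st p q hevB hIsSt
  set d := max p.natDegree q.natDegree with hd
  set cp : FT r T' := (psi E r T' A).coeff d with hcp
  set cq : FT r T' := (psi E r T' Bp).coeff d with hcq
  have hpc : p.coeff d = algebraMap (FT r T') ℝ cp := by rw [hp, coeff_map]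
  have hqc : q.coeff d = algebraMap (FT r T') ℝ cq := by rw [hq, coeff_map]
  rw [hpc, hqc] at heq
  rw [hqc] at hqd
  have hcqne : cq ≠ 0 := fun h0 => hqd (by rw [h0, map_zero])
  -- b is algebraic over FT r T'
  have halg : IsAlgebraic (FT r T') b := by
    refine ⟨C cq * X - C cp, ?_, ?_⟩
    · intro h0
      apply hcqne
      have := congrArg (fun P => Polynomial.coeff P 1) h0
      simpa [coeff_sub, coeff_C_mul, coeff_C] using this
    · simp only [map_sub, map_mul, Polynomial.aeval_C, Polynomial.aeval_X]
      rw [← heq]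
      ring
  -- but b is transcendental over FT r T'
  have htrans : Transcendental (FT r T') b := by
    set s : Set (ι ⊕ ι) := Set.range (gsel T') with hs
    have hsub : AlgebraicIndependent ℚ (fun z : s => r z) :=
      hr.comp Subtype.val Subtype.val_injective
    have hnmem : Sum.inl a ∉ s := by
      rintro ⟨a'', haa⟩
      unfold gsel at haa
      split at haa
      · rw [Sum.inl.injEq] at haa; subst haa; exact ha' ‹_›
      · exact absurd haa (by simp)
    have hopt : AlgebraicIndependent ℚ (fun o : Option s => o.elim b (fun z : s => r z)) := by
      have hinj : Function.Injective (fun o : Option s => o.elim (Sum.inl a) Subtype.val) := by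
        rintro (_ | z1) (_ | z2) hzz
        · rfl
        · simp only [Option.elim] at hzz
          exact absurd (by rw [hzz]; exact z2.2) hnmem
        · simp only [Option.elim] at hzz
          exact absurd (by rw [← hzz]; exact z1.2) hnmem
        · simp only [Option.elim] at hzz
          rw [Subtype.val_injective hzz]
      have := hr.comp (fun o : Option s => o.elim (Sum.inl a) Subtype.val) hinj
      convert this using 1
      funext o
      cases o <;> rfl
    have htr := (hsub.option_iff_transcendental b).1 hopt
    have hseteq : Set.range (fun z : s => r ↑z) = Set.range (uu r T') := by
      rw [show (fun z : s => r ↑z) = r ∘ Subtype.val from rfl, Set.range_comp,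
        Subtype.range_coe, hs, show uu r T' = r ∘ gsel T' from rfl, Set.range_comp]
    rw [hseteq] at htr
    exact htr
  exact htrans halg

end Aux

/-! ### Cardinality facts -/

theorem real_transcendental : Algebra.Transcendental ℚ ℝ := by
  rw [Algebra.transcendental_iff_not_isAlgebraic]
  intro halg
  have h1 : #ℝ ≤ max #ℚ ℵ₀ := Algebra.IsAlgebraic.cardinalMk_le_max ℚ ℝ
  rw [Cardinal.mk_real, Cardinal.mkRat] at h1
  simp only [max_self] at h1
  exact absurd h1 (not_le.mpr Cardinal.aleph0_lt_continuum)

theorem exists_algIndep_family (κ : Type) (hκ : #κ = Cardinal.continuum) :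
    ∃ r : κ → ℝ, AlgebraicIndependent ℚ r := by
  obtain ⟨ι', x, hx⟩ := exists_isTranscendenceBasis' ℚ ℝ
  haveI : Nonempty ι' := hx.nonempty_iff_transcendental.2 real_transcendental
  have hcard := hx.lift_cardinalMk_eq_max_lift
  rw [Cardinal.lift_id, Cardinal.lift_id, Cardinal.lift_id, Cardinal.mk_real,
    Cardinal.mkRat] at hcard
  have h2 : #ι' = Cardinal.continuum := by
    rcases le_total #ι' ℵ₀ with h | h
    · exfalso
      have : Cardinal.continuum ≤ ℵ₀ := by
        rw [hcard]
        exact sup_le (sup_le le_rfl h) le_rfl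
      exact absurd this (not_le.mpr Cardinal.aleph0_lt_continuum)
    · rw [hcard]
      rw [sup_of_le_left (le_trans h le_sup_right), sup_of_le_right h]
  have : #κ = #ι' := by rw [hκ, h2]
  obtain ⟨e⟩ := Cardinal.eq.1 this
  exact ⟨x ∘ e, hx.1.comp e e.injective⟩

/-! ### Main theorem -/

/-- Let `K = ℚ(tᵢ | i < 𝔠)` be the rational function field over `ℚ` in `𝔠` many variables,
i.e. the fraction field of the polynomial ring over `ℚ` in variables indexed by a set of
cardinality `𝔠`. Then there is a family of `2^𝔠` non-archimedean orderings of `K` that are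
pairwise non-isomorphic: for distinct members of the family, no ring automorphism of `K` is
order-preserving from the one to the other. -/
theorem exists_two_pow_continuum_nonarchimedean_orderings
    (ι : Type) (hι : #ι = Cardinal.continuum) :
    ∃ (J : Type) (R : J → (FractionRing (MvPolynomial ι ℚ) →
        FractionRing (MvPolynomial ι ℚ) → Prop)),
      #J = 2 ^ Cardinal.continuum ∧
      (∀ j, IsFieldOrdering (R j) ∧ ¬ IsArchimedeanOrdering (R j)) ∧
      (∀ j j' : J, j ≠ j' →
        ¬ ∃ f : FractionRing (MvPolynomial ι ℚ) ≃+* FractionRing (MvPolynomial ι ℚ),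
          ∀ a b, R j a b ↔ R j' (f a) (f b)) := by
  obtain ⟨r, hr⟩ := exists_algIndep_family (ι ⊕ ι) (by
    simp only [Cardinal.mk_sum, Cardinal.lift_id, hι]
    exact Cardinal.add_eq_self Cardinal.aleph0_le_continuum)
  have hop : #ι = #(Option ι) := by
    rw [Cardinal.mk_option, hι]
    exact (Cardinal.add_one_eq Cardinal.aleph0_le_continuum).symm
  obtain ⟨E⟩ := Cardinal.eq.1 hop
  refine ⟨Set ι, fun T => fun a b => phi E r hr T a < phi E r hr T b, ?_, ?_, ?_⟩
  · rw [Cardinal.mk_set, hι]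
  · intro T
    refine ⟨pullback_isFieldOrdering _, ?_⟩
    apply pullback_not_arch
      (x := algebraMap (MvPolynomial ι ℚ) (KK ι) (MvPolynomial.X (E.symm none)))
    rw [phi_algebraMap, MvPolynomial.aeval_X]
    show (E (E.symm none)).elim ω _ = ω
    rw [Equiv.apply_symm_apply]
    rfl
  · rintro T T' hne ⟨f, hf⟩
    apply hne
    apply Set.Subset.antisymm
    · exact subset_of_orderIso E r hr T T' f hf
    · apply subset_of_orderIso E r hr T' T f.symm
      intro a b
      have := hf (f.symm a) (f.symm b)
      rw [f.apply_symm_apply, f.apply_symm_apply] at this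
      exact this.symm
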